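/- Type preservation for field write on pooled objects: if (Γ, X, Φ) is well-formed, Γ types x at C<ys> and x' at the substituted type of field f, Φ(x) = (π, n), and the write rule updates the heap to X' by setting κs[i][n][j] := Φ(x') where (i,j) = W(L, f), then X' is a well-formed heap and (Γ, X', Φ) is well-formed. -/

import Mathlib

namespace Shapes

abbrev FieldId := ℕ
abbrev VarId := ℕ
abbrev ClassId := ℕ
abbrev LayoutId := ℕ
abbrev MethodId := ℕ

/-- A pool address: `none` is the global none-pool, `some n` a heap pool address. -/
abbrev PoolAddr := Option ℕ

inductive Value where
  | null
  | obj (ω : ℕ)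
  | loc (π : ℕ) (n : ℕ)
deriving DecidableEq

/-- A pool variable: `none` is the `none` keyword. -/
abbrev PoolVar := Option VarId

inductive RVal where
  | val (v : Value)
  | pool (π : PoolAddr)
deriving DecidableEq

abbrev Frame := VarId → Option RVal

/-- The value of a pool variable in a frame. -/
def poolOf (Φ : Frame) : PoolVar → Option PoolAddr
  | none => some none
  | some y => match Φ y with
    | some (RVal.pool π) => some π
    | _ => none

structure Obj where
  cls : ClassId
  params : List PoolAddr
  record : List Value

structure Pool where
  layout : LayoutId
  params : List PoolAddr
  clusters : List (List (List Value))

abbrev Heap := ℕ → Option (Obj ⊕ Pool)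

inductive Expr where
  | null
  | var (x : VarId)
  | newE (C : ClassId) (ys : List PoolVar)
  | call (x : VarId) (m : MethodId) (x' : VarId)
  | read (x : VarId) (f : FieldId)
  | write (x : VarId) (f : FieldId) (x' : VarId)
  | assign (x : VarId) (e : Expr)

structure MethodDecl where
  param : VarId
  paramTy : ClassId × List PoolVar
  retTy : ClassId × List PoolVar
  pools : List (VarId × LayoutId × List PoolVar)
  locals : List (VarId × ClassId × List PoolVar)
  body : Expr

structure ClassDecl where
  params : List (VarId × ClassId × List PoolVar)
  fields : List (FieldId × ClassId × List PoolVar)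
  methods : List MethodDecl

structure LayoutDecl where
  cls : ClassId
  clusters : List (List FieldId)

structure Program where
  classes : ClassId → Option ClassDecl
  layouts : LayoutId → Option LayoutDecl

def owners (cd : ClassDecl) : List VarId := cd.params.map (·.1)

def layoutClass (P : Program) (L : LayoutId) : Option ClassId :=
  (P.layouts L).map (·.cls)

def flookup (cd : ClassDecl) (f : FieldId) : Option (ClassId × List PoolVar) :=
  (cd.fields.find? (fun p => p.1 == f)).map (·.2)

def fieldsOf (cd : ClassDecl) : List FieldId := cd.fields.map (·.1)

def mlookup (cd : ClassDecl) (m : MethodId) : Option MethodDecl := cd.methods[m]?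

/-- Offset of a field in an unpooled object. -/
def offsetC (cd : ClassDecl) (f : FieldId) : Option ℕ :=
  (fieldsOf cd).idxOf? f

/-- Offset `(i, j)` of a field in a layout: cluster index `i`, position `j`. -/
def offsetL (ld : LayoutDecl) (f : FieldId) : Option (ℕ × ℕ) :=
  (ld.clusters.findIdx? (fun κ => κ.contains f)).bind fun i =>
    ((ld.clusters.getD i []).idxOf? f).map fun j => (i, j)

/-- Substitution of formal pool parameters by pool addresses. -/
def substPA (formals : List VarId) (πs : List PoolAddr) : PoolVar → PoolAddr
  | none => none
  | some y => match formals.idxOf? y with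
    | some i => πs.getD i none
    | none => none

/-- Substitution of formal pool parameters by pool variables (actuals). -/
def substPV (formals : List VarId) (actuals : List PoolVar) : PoolVar → PoolVar
  | none => none
  | some y => match formals.idxOf? y with
    | some i => actuals.getD i none
    | none => none

/-- Weak agreement of a value with a runtime class type `C<πs>`. -/
def wagreeVal (P : Program) (X : Heap) : Value → ClassId → List PoolAddr → Prop
  | .null, _, _ => True
  | .obj ω, C, πs => ∃ o, X ω = some (.inl o) ∧ o.cls = C ∧ o.params = πs ∧
      πs.head? ≠ some none
  | .loc π _, C, πs => ∃ p, X π = some (.inr p) ∧ p.params = πs ∧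
      πs.head? = some (some π) ∧ layoutClass P p.layout = some C

/-- Weak agreement of a pool address with a runtime bound `[C<πs>]`. -/
def wagreeBound (P : Program) (X : Heap) : PoolAddr → ClassId → List PoolAddr → Prop
  | none, _, _ => True
  | some π, C, πs => ∃ p, X π = some (.inr p) ∧ p.params = πs ∧
      πs.head? = some (some π) ∧ layoutClass P p.layout = some C

/-- Weak agreement of a pool address with a runtime pool type `L<πs>`. -/
def wagreePoolTy (P : Program) (X : Heap) (_π : PoolAddr) (L : LayoutId)
    (πs : List PoolAddr) : Prop :=
  ∃ π₀ p, πs.head? = some (some π₀) ∧ X π₀ = some (.inr p) ∧ p.layout = L ∧ p.params = πs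

def paramsAgree (P : Program) (X : Heap) (cd : ClassDecl) (πs : List PoolAddr) : Prop :=
  ∀ i (h : i < cd.params.length),
    wagreeBound P X (πs.getD i none)
      (cd.params.get ⟨i, h⟩).2.1
      ((cd.params.get ⟨i, h⟩).2.2.map (substPA (owners cd) πs))

def fieldsAgreeRec (P : Program) (X : Heap) (cd : ClassDecl) (πs : List PoolAddr)
    (ρ : List Value) : Prop :=
  ∀ i (h : i < cd.fields.length),
    wagreeVal P X (ρ.getD i .null)
      (cd.fields.get ⟨i, h⟩).2.1
      ((cd.fields.get ⟨i, h⟩).2.2.map (substPA (owners cd) πs))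

/-- The value at cluster `i`, object index `n`, slot `j`. -/
def cluster3 (κs : List (List (List Value))) (i n j : ℕ) : Value :=
  ((κs.getD i []).getD n []).getD j .null

/-- Strong agreement of the pooled object at `(π, n)` with `C<πs>`. -/
def sagreeLoc (P : Program) (X : Heap) (π n : ℕ) (C : ClassId) (πs : List PoolAddr) : Prop :=
  ∃ p cd ld, X π = some (.inr p) ∧ p.params = πs ∧ πs.head? = some (some π) ∧
    P.layouts p.layout = some ld ∧ ld.cls = C ∧ P.classes C = some cd ∧
    ∀ f i j D zs, offsetL ld f = some (i, j) → flookup cd f = some (D, zs) →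
      wagreeVal P X (cluster3 p.clusters i n j) D (zs.map (substPA (owners cd) πs))

/-- Strong agreement of the unpooled object at `ω` with `C<πs>`. -/
def sagreeObjAddr (P : Program) (X : Heap) (ω : ℕ) (C : ClassId) (πs : List PoolAddr) : Prop :=
  ∃ o cd, X ω = some (.inl o) ∧ o.cls = C ∧ o.params = πs ∧ πs.head? = some none ∧
    P.classes C = some cd ∧ paramsAgree P X cd πs ∧ fieldsAgreeRec P X cd πs o.record

/-- Strong agreement of the pool at `π` with `L<πs>`. -/
def sagreePoolAddr (P : Program) (X : Heap) (π : ℕ) (L : LayoutId) (πs : List PoolAddr) : Prop :=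
  ∃ p ld cd, X π = some (.inr p) ∧ p.layout = L ∧ p.params = πs ∧
    πs.head? = some (some π) ∧
    P.layouts L = some ld ∧ P.classes ld.cls = some cd ∧
    paramsAgree P X cd πs ∧
    (∀ κ ∈ p.clusters, κ.length = (p.clusters.headD []).length) ∧
    (∀ n, n < (p.clusters.headD []).length → sagreeLoc P X π n ld.cls πs)

/-- A well-formed heap: every address strongly agrees with some runtime type. -/
def wfHeap (P : Program) (X : Heap) : Prop :=
  ∀ a e, X a = some e →
    (∃ C πs, sagreeObjAddr P X a C πs) ∨ (∃ L πs, sagreePoolAddr P X a L πs)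

inductive Ty where
  | obj (C : ClassId) (ys : List PoolVar)
  | pool (L : LayoutId) (ys : List PoolVar)
  | bound (C : ClassId) (ys : List PoolVar)
deriving DecidableEq

abbrev Ctx := VarId → Option Ty

mutual
/-- Well-formedness of the bound `[C<ys>]` in a context. -/
inductive WfBound (P : Program) (Γ : Ctx) : ClassId → List PoolVar → Prop where
  | mk : ∀ C ys cd, P.classes C = some cd →
      (∀ i (h : i < cd.params.length),
        PoolBoundTy P Γ (ys.getD i none)
          (cd.params.get ⟨i, h⟩).2.1
          ((cd.params.get ⟨i, h⟩).2.2.map (substPV (owners cd) ys))) →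
      WfBound P Γ C ys

/-- A pool variable has a given bound type. -/
inductive PoolBoundTy (P : Program) (Γ : Ctx) : PoolVar → ClassId → List PoolVar → Prop where
  | noneB : ∀ C ys, WfBound P Γ C ys → PoolBoundTy P Γ none C ys
  | fromBound : ∀ v C ys, Γ v = some (.bound C ys) → PoolBoundTy P Γ (some v) C ys
  | fromPool : ∀ v L C ys, Γ v = some (.pool L ys) → layoutClass P L = some C →
      PoolBoundTy P Γ (some v) C ys
end

def WfObjTy (P : Program) (Γ : Ctx) (C : ClassId) (ys : List PoolVar) : Prop :=
  WfBound P Γ C ys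

def WfPoolTy (P : Program) (Γ : Ctx) (L : LayoutId) (ys : List PoolVar) : Prop :=
  ∃ C, WfBound P Γ C ys ∧ layoutClass P L = some C

/-- Expression typing: `Γ ⊢ e : C<ys>`. -/
inductive HasTy (P : Program) (Γ : Ctx) : Expr → ClassId → List PoolVar → Prop where
  | null : ∀ C ys, WfBound P Γ C ys → HasTy P Γ .null C ys
  | var : ∀ x C ys, Γ x = some (.obj C ys) → HasTy P Γ (.var x) C ys
  | assign : ∀ x e C ys, Γ x = some (.obj C ys) → HasTy P Γ e C ys →
      HasTy P Γ (.assign x e) C ys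
  | newE : ∀ C ys, WfBound P Γ C ys → HasTy P Γ (.newE C ys) C ys
  | read : ∀ x f C ys cd D zs, Γ x = some (.obj C ys) → P.classes C = some cd →
      flookup cd f = some (D, zs) →
      HasTy P Γ (.read x f) D (zs.map (substPV (owners cd) ys))
  | write : ∀ x f x' C ys cd D zs, Γ x = some (.obj C ys) → P.classes C = some cd →
      flookup cd f = some (D, zs) →
      Γ x' = some (.obj D (zs.map (substPV (owners cd) ys))) →
      HasTy P Γ (.write x f x') D (zs.map (substPV (owners cd) ys))
  | call : ∀ x m x' C ys cd md, Γ x = some (.obj C ys) → P.classes C = some cd →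
      mlookup cd m = some md →
      Γ x' = some (.obj md.paramTy.1 (md.paramTy.2.map (substPV (owners cd) ys))) →
      HasTy P Γ (.call x m x') md.retTy.1 (md.retTy.2.map (substPV (owners cd) ys))

/-- A run-time value agrees with a (static) type instantiated via the frame. -/
def agreeTy (P : Program) (X : Heap) (Φ : Frame) (r : RVal) : Ty → Prop
  | .obj C ys => ∃ v πs, r = .val v ∧ ys.mapM (poolOf Φ) = some πs ∧ wagreeVal P X v C πs
  | .pool L ys => ∃ π πs, r = .pool π ∧ ys.mapM (poolOf Φ) = some πs ∧
      wagreePoolTy P X π L πs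
  | .bound C ys => ∃ π πs, r = .pool π ∧ ys.mapM (poolOf Φ) = some πs ∧
      wagreeBound P X π C πs

/-- Well-formed configuration `Γ ⊢ X, Φ`. -/
def wfConfig (P : Program) (Γ : Ctx) (X : Heap) (Φ : Frame) : Prop :=
  wfHeap P X ∧ (∀ x, (Γ x).isSome ↔ (Φ x).isSome) ∧
  ∀ x T, Γ x = some T → ∃ r, Φ x = some r ∧ agreeTy P X Φ r T

def updHeap (X : Heap) (a : ℕ) (e : Obj ⊕ Pool) : Heap :=
  fun b => if b = a then some e else X b

def updFrame (Φ : Frame) (x : VarId) (r : RVal) : Frame :=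
  fun z => if z = x then some r else Φ z

def updCtx (Γ : Ctx) (x : VarId) (T : Ty) : Ctx :=
  fun z => if z = x then some T else Γ z

/-- `this` is a distinguished variable. -/
def thisVar : VarId := 0

/-- Append one fresh record of nulls to each cluster (pooled allocation). -/
def appendNulls (κs : List (List (List Value))) (fss : List (List FieldId)) :
    List (List (List Value)) :=
  List.zipWith (fun κ fs => κ ++ [List.replicate fs.length Value.null]) κs fss

/-- Update slot `(i, n, j)` in the clusters of a pool. -/
def setCluster (κs : List (List (List Value))) (i n j : ℕ) (v : Value) :
    List (List (List Value)) :=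
  κs.set i ((κs.getD i []).set n (((κs.getD i []).getD n []).set j v))

def getThis (P : Program) (X : Heap) : Value → Option (ClassId × List PoolAddr)
  | .obj ω => (X ω).bind fun e => match e with
      | .inl o => some (o.cls, o.params)
      | .inr _ => none
  | .loc π _ => (X π).bind fun e => match e with
      | .inr p => (layoutClass P p.layout).map fun C => (C, p.params)
      | .inl _ => none
  | .null => none

/-- The frame a method starts with: `this`, the parameter, and the class pool params. -/
def methodFrame (md : MethodDecl) (thisv : Value) (arg : RVal)
    (ownersC : List VarId) (πs : List PoolAddr) : Frame :=
  fun z =>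
    if z = thisVar then some (.val thisv)
    else if z = md.param then some arg
    else match ownersC.idxOf? z with
      | some i => some (.pool (πs.getD i none))
      | none => none

/-- Extend a method frame with its local pool and object variables. -/
def extendDecls (Φ : Frame) (πas : List ℕ) (md : MethodDecl) : Frame :=
  fun z =>
    match (md.pools.map (·.1)).idxOf? z with
    | some i => some (.pool (some (πas.getD i 0)))
    | none => match (md.locals.map (·.1)).idxOf? z with
      | some _ => some (.val .null)
      | none => Φ z

/-- Big-step operational semantics of SHAPES. -/
inductive Red (P : Program) : Heap → Frame → Expr → Heap → Frame → Value → Prop where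
  | nullR : ∀ X Φ, Red P X Φ .null X Φ .null
  | varR : ∀ X Φ x v, Φ x = some (.val v) → Red P X Φ (.var x) X Φ v
  | assignR : ∀ X Φ x e X' Φ' v, Red P X Φ e X' Φ' v →
      Red P X Φ (.assign x e) X' (updFrame Φ' x (.val v)) v
  | newObjR : ∀ X Φ C ys πs ω cd,
      ys.mapM (poolOf Φ) = some πs → πs.head? = some none →
      X ω = none → P.classes C = some cd →
      Red P X Φ (.newE C ys)
        (updHeap X ω (.inl ⟨C, πs, List.replicate cd.fields.length .null⟩)) Φ (.obj ω)
  | newPoolR : ∀ X Φ C ys πs π p ld,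
      ys.mapM (poolOf Φ) = some πs → πs.head? = some (some π) →
      X π = some (.inr p) → P.layouts p.layout = some ld →
      Red P X Φ (.newE C ys)
        (updHeap X π (.inr ⟨p.layout, p.params, appendNulls p.clusters ld.clusters⟩))
        Φ (.loc π (p.clusters.headD []).length)
  | readObjR : ∀ X Φ x f ω o cd i,
      Φ x = some (.val (.obj ω)) → X ω = some (.inl o) →
      P.classes o.cls = some cd → offsetC cd f = some i →
      Red P X Φ (.read x f) X Φ (o.record.getD i .null)
  | readPoolR : ∀ X Φ x f π n p ld i j,
      Φ x = some (.val (.loc π n)) → X π = some (.inr p) →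
      P.layouts p.layout = some ld → offsetL ld f = some (i, j) →
      Red P X Φ (.read x f) X Φ (cluster3 p.clusters i n j)
  | writeObjR : ∀ X Φ x f x' ω o cd i v,
      Φ x = some (.val (.obj ω)) → Φ x' = some (.val v) →
      X ω = some (.inl o) → P.classes o.cls = some cd → offsetC cd f = some i →
      Red P X Φ (.write x f x')
        (updHeap X ω (.inl ⟨o.cls, o.params, o.record.set i v⟩)) Φ v
  | writePoolR : ∀ X Φ x f x' π n p ld i j v,
      Φ x = some (.val (.loc π n)) → Φ x' = some (.val v) →
      X π = some (.inr p) → P.layouts p.layout = some ld → offsetL ld f = some (i, j) →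
      Red P X Φ (.write x f x')
        (updHeap X π (.inr ⟨p.layout, p.params, setCluster p.clusters i n j v⟩)) Φ v
  | callR : ∀ X Φ x m x'' v arg C πs cd md Φ₀ πas Φ₁ (X₁ : Heap) X' Φ' v',
      Φ x = some (.val v) →
      getThis P X v = some (C, πs) →
      P.classes C = some cd → mlookup cd m = some md →
      Φ x'' = some arg →
      Φ₀ = methodFrame md v arg (owners cd) πs →
      πas.length = md.pools.length → πas.Nodup →
      (∀ π ∈ πas, X π = none) →
      Φ₁ = extendDecls Φ₀ πas md →
      (∀ i (h : i < md.pools.length),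
        ∃ ld πs', P.layouts (md.pools.get ⟨i, h⟩).2.1 = some ld ∧
          ((md.pools.get ⟨i, h⟩).2.2).mapM (poolOf Φ₁) = some πs' ∧
          X₁ (πas.getD i 0) = some (.inr ⟨(md.pools.get ⟨i, h⟩).2.1, πs',
            List.replicate ld.clusters.length []⟩)) →
      (∀ a, a ∉ πas → X₁ a = X a) →
      Red P X₁ Φ₁ md.body X' Φ' v' →
      Red P X Φ (.call x m x'') X' Φ v'

/-- The typing context arising from a class's pool parameter declarations. -/
def ctxOfClass (cd : ClassDecl) : Ctx :=
  fun z => (cd.params.find? (fun p => p.1 == z)).map fun p => Ty.bound p.2.1 p.2.2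

/-- The typing context used to check a method body. -/
def ctxOfMethod (C : ClassId) (cd : ClassDecl) (md : MethodDecl) : Ctx :=
  fun z =>
    if z = thisVar then some (.obj C (cd.params.map fun p => some p.1))
    else if z = md.param then some (.obj md.paramTy.1 md.paramTy.2)
    else match md.pools.find? (fun p => p.1 == z) with
    | some p => some (.pool p.2.1 p.2.2)
    | none => match md.locals.find? (fun l => l.1 == z) with
      | some l => some (.obj l.2.1 l.2.2)
      | none => ctxOfClass cd z

/-- A layout declaration is well-formed for a class: its clusters are a
disjoint partition of the class's fields. -/
def wfLayoutDecl (cd : ClassDecl) (ld : LayoutDecl) : Prop :=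
  ld.clusters.flatten.Perm (fieldsOf cd) ∧ ∀ κ ∈ ld.clusters, κ.Nodup

def wfClassDecl (P : Program) (C : ClassId) (cd : ClassDecl) : Prop :=
  WfBound P (ctxOfClass cd) C (cd.params.map fun p => some p.1) ∧
  (∀ fd ∈ cd.fields, WfObjTy P (ctxOfClass cd) fd.2.1 fd.2.2) ∧
  ∀ md ∈ cd.methods,
    WfObjTy P (ctxOfClass cd) md.paramTy.1 md.paramTy.2 ∧
    WfObjTy P (ctxOfClass cd) md.retTy.1 md.retTy.2 ∧
    HasTy P (ctxOfMethod C cd md) md.body md.retTy.1 md.retTy.2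

def wfProgram (P : Program) : Prop :=
  (∀ C cd, P.classes C = some cd → wfClassDecl P C cd) ∧
  (∀ L ld, P.layouts L = some ld →
    ∃ cd, P.classes ld.cls = some cd ∧ wfLayoutDecl cd ld)


/-- One heap simulates another if it preserves objects exactly and pools up to
layout and parameters. -/
def HeapSim (X X' : Heap) : Prop :=
  (∀ b o, X b = some (.inl o) → X' b = some (.inl o)) ∧
  (∀ b q, X b = some (.inr q) → ∃ q', X' b = some (.inr q') ∧
    q'.layout = q.layout ∧ q'.params = q.params)

lemma wagreeVal_mono {P : Program} {X X' : Heap} (h : HeapSim X X') {v C πs} :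
    wagreeVal P X v C πs → wagreeVal P X' v C πs := by
  cases v with
  | null => intro _; trivial
  | obj ω => rintro ⟨o, ho, rest⟩; exact ⟨o, h.1 _ _ ho, rest⟩
  | loc π n =>
    rintro ⟨q, hq, h1, h2, h3⟩
    obtain ⟨q', hq', hl, hpr⟩ := h.2 _ _ hq
    exact ⟨q', hq', hpr.trans h1, h2, by rwa [layoutClass, hl, ← layoutClass]⟩

lemma wagreeBound_mono {P : Program} {X X' : Heap} (h : HeapSim X X') {π C πs} :
    wagreeBound P X π C πs → wagreeBound P X' π C πs := by
  cases π with
  | none => intro _; trivial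
  | some π =>
    rintro ⟨q, hq, h1, h2, h3⟩
    obtain ⟨q', hq', hl, hpr⟩ := h.2 _ _ hq
    exact ⟨q', hq', hpr.trans h1, h2, by rwa [layoutClass, hl, ← layoutClass]⟩

lemma wagreePoolTy_mono {P : Program} {X X' : Heap} (h : HeapSim X X') {π L πs} :
    wagreePoolTy P X π L πs → wagreePoolTy P X' π L πs := by
  rintro ⟨π₀, q, h0, hq, h1, h2⟩
  obtain ⟨q', hq', hl, hpr⟩ := h.2 _ _ hq
  exact ⟨π₀, q', h0, hq', hl.trans h1, hpr.trans h2⟩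

lemma paramsAgree_mono {P : Program} {X X' : Heap} (h : HeapSim X X') {cd πs} :
    paramsAgree P X cd πs → paramsAgree P X' cd πs :=
  fun hp i hi => wagreeBound_mono h (hp i hi)

lemma fieldsAgreeRec_mono {P : Program} {X X' : Heap} (h : HeapSim X X') {cd πs ρ} :
    fieldsAgreeRec P X cd πs ρ → fieldsAgreeRec P X' cd πs ρ :=
  fun hp i hi => wagreeVal_mono h (hp i hi)

lemma sagreeObjAddr_mono {P : Program} {X X' : Heap} (h : HeapSim X X') {a C πs}
    (hXX : X' a = X a) : sagreeObjAddr P X a C πs → sagreeObjAddr P X' a C πs := by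
  rintro ⟨o, cd, ho, h1, h2, h3, h4, h5, h6⟩
  exact ⟨o, cd, hXX.trans ho, h1, h2, h3, h4, paramsAgree_mono h h5,
    fieldsAgreeRec_mono h h6⟩

lemma sagreeLoc_mono {P : Program} {X X' : Heap} (h : HeapSim X X') {π n C πs}
    (hXX : X' π = X π) : sagreeLoc P X π n C πs → sagreeLoc P X' π n C πs := by
  rintro ⟨q, cd, ld, hq, h1, h2, h3, h4, h5, h6⟩
  exact ⟨q, cd, ld, hXX.trans hq, h1, h2, h3, h4, h5,
    fun f i j D zs ho hf => wagreeVal_mono h (h6 f i j D zs ho hf)⟩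

lemma sagreePoolAddr_mono {P : Program} {X X' : Heap} (h : HeapSim X X') {π L πs}
    (hXX : X' π = X π) : sagreePoolAddr P X π L πs → sagreePoolAddr P X' π L πs := by
  rintro ⟨q, ld, cd, hq, h1, h2, h3, h4, h5, h6, h7, h8⟩
  exact ⟨q, ld, cd, hXX.trans hq, h1, h2, h3, h4, h5, paramsAgree_mono h h6, h7,
    fun m hm => sagreeLoc_mono h hXX (h8 m hm)⟩

lemma agreeTy_mono {P : Program} {X X' : Heap} (h : HeapSim X X') {Φ r T} :
    agreeTy P X Φ r T → agreeTy P X' Φ r T := by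
  cases T with
  | obj C ys => rintro ⟨v, πs, h1, h2, h3⟩; exact ⟨v, πs, h1, h2, wagreeVal_mono h h3⟩
  | pool L ys => rintro ⟨π, πs, h1, h2, h3⟩; exact ⟨π, πs, h1, h2, wagreePoolTy_mono h h3⟩
  | bound C ys => rintro ⟨π, πs, h1, h2, h3⟩; exact ⟨π, πs, h1, h2, wagreeBound_mono h h3⟩

lemma mapM_poolOf_getD {Φ : Frame} :
    ∀ {ys : List PoolVar} {πs : List PoolAddr}, ys.mapM (poolOf Φ) = some πs →
      ∀ k, poolOf Φ (ys.getD k none) = some (πs.getD k none)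
  | [], πs, h, k => by
    simp only [List.mapM_nil, pure, Option.some.injEq] at h
    subst h; simp [poolOf]
  | y :: ys, πs, h, k => by
    simp only [List.mapM_cons, Option.bind_eq_bind, Option.bind_eq_some_iff,
      Option.some.injEq, pure] at h
    obtain ⟨π₀, h0, t, ht, rfl⟩ := h
    cases k with
    | zero => simpa using h0
    | succ k => simpa using mapM_poolOf_getD ht k

lemma subst_poolOf {Φ : Frame} {fs : List VarId} {ys : List PoolVar} {πs : List PoolAddr}
    (h : ys.mapM (poolOf Φ) = some πs) (z : PoolVar) :
    poolOf Φ (substPV fs ys z) = some (substPA fs πs z) := by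
  cases z with
  | none => simp [substPV, substPA, poolOf]
  | some y =>
    simp only [substPV, substPA]
    cases fs.idxOf? y with
    | none => simp [poolOf]
    | some k => exact mapM_poolOf_getD h k

lemma mapM_eq_map_of {α β} {g : α → Option β} {h : α → β} :
    ∀ {l : List α} {l' : List β}, (∀ a ∈ l, g a = some (h a)) →
      l.mapM g = some l' → l' = l.map h
  | [], l', _, hm => by
    rw [List.mapM_nil] at hm
    exact (Option.some_inj.mp hm).symm
  | a :: l, l', hg, hm => by
    simp only [List.mapM_cons, Option.bind_eq_bind, Option.bind_eq_some_iff,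
      Option.some.injEq, pure] at hm
    obtain ⟨b, hb, t, ht, rfl⟩ := hm
    rw [hg a (by simp)] at hb
    cases hb
    simp [mapM_eq_map_of (fun a ha => hg a (by simp [ha])) ht]

lemma indexOf?_getElem {α} [BEq α] [LawfulBEq α] {l : List α} {a : α} {i : ℕ}
    (h : l.idxOf? a = some i) : ∃ hi : i < l.length, l[i] = a := by
  rw [List.idxOf?, List.findIdx?_eq_some_iff_getElem] at h
  obtain ⟨hi, h1, _⟩ := h
  exact ⟨hi, by simpa using h1⟩

lemma offsetL_inj {ld : LayoutDecl} {f₁ f₂ : FieldId} {i j : ℕ}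
    (h₁ : offsetL ld f₁ = some (i, j)) (h₂ : offsetL ld f₂ = some (i, j)) : f₁ = f₂ := by
  simp only [offsetL, Option.bind_eq_some_iff, Option.map_eq_some_iff] at h₁ h₂
  obtain ⟨i₁, hi₁, j₁, hj₁, he₁⟩ := h₁
  obtain ⟨i₂, hi₂, j₂, hj₂, he₂⟩ := h₂
  cases he₁; cases he₂
  obtain ⟨hl₁, hg₁⟩ := indexOf?_getElem hj₁
  obtain ⟨hl₂, hg₂⟩ := indexOf?_getElem hj₂
  rw [← hg₁, ← hg₂]


lemma getD_set_ne' {α} {l : List α} {n n' : ℕ} {a d : α} (h : n' ≠ n) :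
    (l.set n a).getD n' d = l.getD n' d := by
  rw [List.getD_eq_getElem?_getD, List.getD_eq_getElem?_getD,
    List.getElem?_set_ne (Ne.symm h)]

lemma getD_set_self_or' {α} {l : List α} {n : ℕ} {a d : α} :
    (l.set n a).getD n d = a ∨ (l.set n a).getD n d = l.getD n d := by
  by_cases h : n < l.length
  · left; rw [List.getD_eq_getElem?_getD, List.getElem?_set_self h]; rfl
  · right; rw [List.set_eq_of_length_le (le_of_not_gt h)]

lemma headD_eq_getD_zero {α} (l : List α) (d : α) : l.headD d = l.getD 0 d := by
  cases l <;> rfl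

lemma cluster3_setCluster_ne {κs : List (List (List Value))} {i n j i' n' j' : ℕ} {w : Value}
    (h : ¬(i' = i ∧ n' = n ∧ j' = j)) :
    cluster3 (setCluster κs i n j w) i' n' j' = cluster3 κs i' n' j' := by
  unfold cluster3 setCluster
  by_cases hii : i' = i
  · subst hii
    rcases getD_set_self_or' (l := κs)
        (a := ((κs.getD i' []).set n (((κs.getD i' []).getD n []).set j w))) (d := []) with h1 | h1
    · rw [h1]
      by_cases hnn : n' = n
      · subst hnn
        rcases getD_set_self_or' (l := κs.getD i' [])
            (a := ((κs.getD i' []).getD n' []).set j w) (d := []) with h2 | h2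
        · rw [h2]
          have hjj : j' ≠ j := fun hj => h ⟨rfl, rfl, hj⟩
          exact getD_set_ne' hjj
        · rw [h2]
      · rw [getD_set_ne' hnn]
    · rw [h1]
  · rw [getD_set_ne' hii]

lemma cluster3_setCluster_self_or {κs : List (List (List Value))} {i n j : ℕ} {w : Value} :
    cluster3 (setCluster κs i n j w) i n j = w ∨
      cluster3 (setCluster κs i n j w) i n j = cluster3 κs i n j := by
  unfold cluster3 setCluster
  rcases getD_set_self_or' (l := κs)
      (a := ((κs.getD i []).set n (((κs.getD i []).getD n []).set j w))) (d := []) with h1 | h1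
  · rw [h1]
    rcases getD_set_self_or' (l := κs.getD i [])
        (a := ((κs.getD i []).getD n []).set j w) (d := []) with h2 | h2
    · rw [h2]
      rcases getD_set_self_or' (l := (κs.getD i []).getD n []) (a := w) (d := Value.null)
          (n := j) with h3 | h3
      · left; exact h3
      · right; rw [h3]
    · right; rw [h2]
  · right; rw [h1]

lemma setCluster_headD_length {κs : List (List (List Value))} {i n j : ℕ} {w : Value} :
    ((setCluster κs i n j w).headD []).length = (κs.headD []).length := by
  unfold setCluster
  rw [headD_eq_getD_zero, headD_eq_getD_zero]
  by_cases hi : i = 0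
  · subst hi
    rcases getD_set_self_or' (l := κs)
        (a := ((κs.getD 0 []).set n (((κs.getD 0 []).getD n []).set j w))) (d := []) with h1 | h1
    · rw [h1, List.length_set]
    · rw [h1]
  · rw [getD_set_ne' (Ne.symm hi)]

lemma setCluster_len {κs : List (List (List Value))} {i n j : ℕ} {w : Value}
    (hlen : ∀ κ ∈ κs, κ.length = (κs.headD []).length) :
    ∀ κ ∈ setCluster κs i n j w, κ.length = ((setCluster κs i n j w).headD []).length := by
  intro κ hκ
  rw [setCluster_headD_length]
  unfold setCluster at hκ
  by_cases hi : i < κs.length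
  · rcases List.mem_or_eq_of_mem_set hκ with h | h
    · exact hlen κ h
    · subst h
      rw [List.length_set]
      have hm : κs.getD i [] ∈ κs := by
        rw [List.getD_eq_getElem?_getD, List.getElem?_eq_getElem hi]
        simpa using List.getElem_mem hi
      exact hlen _ hm
  · rw [List.set_eq_of_length_le (le_of_not_gt hi)] at hκ
    exact hlen κ hκ


lemma mapM_map_opt {α β γ} (g : β → Option γ) (σ : α → β) :
    ∀ l : List α, (l.map σ).mapM g = l.mapM (fun a => g (σ a))
  | [] => rfl
  | a :: l => by
    simp only [List.map_cons, List.mapM_cons, mapM_map_opt g σ l]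

/-- Type preservation for field write on pooled objects: if `(Γ, X, Φ)` is
well-formed, `Γ` types `x` at `C<ys>` and `x'` at the substituted type of
field `f`, `Φ x = (π, n)`, and the write rule updates the heap to `X'` by
setting `κs[i][n][j] := Φ x'` where `(i, j) = W(L, f)`, then `X'` is a
well-formed heap and `(Γ, X', Φ)` is well-formed. -/
theorem write_pool_preservation (P : Program) (Γ : Ctx) (X X' : Heap)
    (Φ : Frame) (x x' : VarId) (f : FieldId) (C : ClassId) (ys : List PoolVar)
    (cd : ClassDecl) (D : ClassId) (zs : List PoolVar)
    (π n : ℕ) (p : Pool) (ld : LayoutDecl) (i j : ℕ) (w : Value)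
    (hwf : wfConfig P Γ X Φ)
    (hx : Γ x = some (.obj C ys))
    (hcd : P.classes C = some cd)
    (hfl : flookup cd f = some (D, zs))
    (hx' : Γ x' = some (.obj D (zs.map (substPV (owners cd) ys))))
    (hΦ : Φ x = some (.val (.loc π n)))
    (hΦ' : Φ x' = some (.val w))
    (hp : X π = some (.inr p))
    (hld : P.layouts p.layout = some ld)
    (hoff : offsetL ld f = some (i, j))
    (hX' : X' = updHeap X π (.inr ⟨p.layout, p.params, setCluster p.clusters i n j w⟩)) :
    wfHeap P X' ∧ wfConfig P Γ X' Φ := by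
  subst hX'
  obtain ⟨hwfH, hdom, hag⟩ := hwf
  -- agreement of x
  obtain ⟨r, hr, hagx⟩ := hag x _ hx
  obtain rfl : r = RVal.val (.loc π n) := (Option.some_inj.mp (hΦ.symm.trans hr)).symm
  obtain ⟨v, πs, hv, hys, hwv⟩ := hagx
  obtain rfl : v = Value.loc π n := (RVal.val.inj hv).symm
  obtain ⟨p₁, hp₁, hparams, hhead, hlayC⟩ := hwv
  obtain rfl : p = p₁ := Sum.inr.inj (Option.some_inj.mp (hp.symm.trans hp₁))
  have hldC : ld.cls = C := by
    rw [layoutClass, hld] at hlayC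
    simpa using hlayC
  -- agreement of x'
  obtain ⟨r', hr', hagx'⟩ := hag x' _ hx'
  obtain rfl : r' = RVal.val w := (Option.some_inj.mp (hΦ'.symm.trans hr')).symm
  obtain ⟨w₁, πs₂, hw₁, hzs, hww⟩ := hagx'
  obtain rfl : w = w₁ := RVal.val.inj hw₁
  rw [mapM_map_opt] at hzs
  have hπs₂ : πs₂ = zs.map (substPA (owners cd) πs) :=
    mapM_eq_map_of (fun z _ => subst_poolOf hys z) hzs
  rw [hπs₂] at hww
  -- old strong agreement of the pool at π
  rcases hwfH π _ hp with ⟨C₀, πs₀, hobj⟩ | ⟨L₀, πs₀, hpool⟩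
  · obtain ⟨o, _, ho, _⟩ := hobj
    rw [hp] at ho
    simp at ho
  obtain ⟨q, ld₀, cd₀, hq, hqL, hqparams, hheadP, hld₀, hcd₀, hpar, hlen, hloc⟩ := hpool
  obtain rfl : p = q := Sum.inr.inj (Option.some_inj.mp (hp.symm.trans hq))
  subst hqL
  obtain rfl : ld = ld₀ := Option.some_inj.mp (hld.symm.trans hld₀)
  obtain rfl : πs = πs₀ := hparams.symm.trans hqparams
  rw [hldC] at hcd₀
  obtain rfl : cd = cd₀ := Option.some_inj.mp (hcd.symm.trans hcd₀)
  -- the updated heap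
  set E : Obj ⊕ Pool := .inr ⟨p.layout, p.params, setCluster p.clusters i n j w⟩ with hE
  have hXne : ∀ a, a ≠ π → updHeap X π E a = X a := fun a ha => by simp [updHeap, ha]
  have hX'π : updHeap X π E π = some E := by simp [updHeap]
  have hsim : HeapSim X (updHeap X π E) := by
    constructor
    · intro b o hb
      have hbne : b ≠ π := by rintro rfl; rw [hp] at hb; simp at hb
      rw [hXne b hbne]; exact hb
    · intro b q hb
      by_cases hbπ : b = π
      · subst hbπ
        have hqp : q = p := Sum.inr.inj (Option.some_inj.mp (hb.symm.trans hp))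
        exact ⟨⟨p.layout, p.params, setCluster p.clusters i n j w⟩, hX'π, by rw [hqp],
          by rw [hqp]⟩
      · exact ⟨q, by rw [hXne b hbπ]; exact hb, rfl, rfl⟩
  have hwwX' : wagreeVal P (updHeap X π E) w D (zs.map (substPA (owners cd) πs)) :=
    wagreeVal_mono hsim hww
  -- transfer of old per-record agreement
  have hfieldOld : ∀ n', n' < (p.clusters.headD []).length →
      ∀ f' i' j' D' zs', offsetL ld f' = some (i', j') → flookup cd f' = some (D', zs') →
        wagreeVal P X (cluster3 p.clusters i' n' j') D'
          (zs'.map (substPA (owners cd) πs)) := by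
    intro n' hn' f' i' j' D' zs' ho hf
    obtain ⟨q₁, cd₁, ld₁, hq₁, _, _, hld₁, _, hcd₁, hfields⟩ := hloc n' hn'
    obtain rfl : p = q₁ := Sum.inr.inj (Option.some_inj.mp (hp.symm.trans hq₁))
    obtain rfl : ld = ld₁ := Option.some_inj.mp (hld.symm.trans hld₁)
    rw [hldC] at hcd₁
    obtain rfl : cd = cd₁ := Option.some_inj.mp (hcd.symm.trans hcd₁)
    exact hfields f' i' j' D' zs' ho hf
  -- new per-record agreement
  have hlocNew : ∀ n', n' < ((setCluster p.clusters i n j w).headD []).length →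
      sagreeLoc P (updHeap X π E) π n' ld.cls πs := by
    intro n' hn'
    rw [setCluster_headD_length] at hn'
    refine ⟨⟨p.layout, p.params, setCluster p.clusters i n j w⟩, cd, ld, hX'π, hparams,
      hhead, hld, rfl, (by rw [hldC]; exact hcd), ?_⟩
    intro f' i' j' D' zs' ho hf
    show wagreeVal P (updHeap X π E) (cluster3 (setCluster p.clusters i n j w) i' n' j')
      D' (zs'.map (substPA (owners cd) πs))
    by_cases hidx : i' = i ∧ n' = n ∧ j' = j
    · obtain ⟨rfl, rfl, rfl⟩ := hidx
      obtain rfl : f = f' := (offsetL_inj ho hoff).symm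
      have h2 := Option.some_inj.mp (hfl.symm.trans hf)
      obtain rfl : D = D' := congrArg Prod.fst h2
      obtain rfl : zs = zs' := congrArg Prod.snd h2
      rcases cluster3_setCluster_self_or (κs := p.clusters) (i := i') (n := n') (j := j')
          (w := w) with hc | hc
      · rw [hc]; exact hwwX'
      · rw [hc]
        exact wagreeVal_mono hsim (hfieldOld n' hn' f i' j' D zs hoff hfl)
    · rw [cluster3_setCluster_ne hidx]
      exact wagreeVal_mono hsim (hfieldOld n' hn' f' i' j' D' zs' ho hf)
  have hwfH' : wfHeap P (updHeap X π E) := by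
    intro a e hae
    by_cases haπ : a = π
    · subst haπ
      right
      exact ⟨p.layout, πs, ⟨p.layout, p.params, setCluster p.clusters i n j w⟩, ld, cd,
        hX'π, rfl, hparams, hhead, hld, (by rw [hldC]; exact hcd),
        paramsAgree_mono hsim hpar, setCluster_len hlen, hlocNew⟩
    · rcases hwfH a e (by rwa [hXne a haπ] at hae) with ⟨C₁, πs₁, h1⟩ | ⟨L₁, πs₁, h1⟩
      · exact Or.inl ⟨C₁, πs₁, sagreeObjAddr_mono hsim (hXne a haπ) h1⟩
      · exact Or.inr ⟨L₁, πs₁, sagreePoolAddr_mono hsim (hXne a haπ) h1⟩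
  refine ⟨hwfH', hwfH', hdom, fun z T hT => ?_⟩
  obtain ⟨r, hr, ha⟩ := hag z T hT
  exact ⟨r, hr, agreeTy_mono hsim ha⟩


end Shapes
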